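/- Let h(n) be the number of tuples (α₁,α₂,β₁,β₂,γ₁,γ₂) ∈ ℕ⁶ with α₁+α₂ = β₁+β₂ = γ₁+γ₂ and α₂ + β₂ + γ₁ + 2γ₂ = n (the counting function for the weights a = (0,1), b = (0,1), c = (1,2)). Then in the ring of formal power series over ℤ, (∑_{n≥0} h(n)tⁿ) · (1−t)(1−t²)³(1−t³)³(1−t⁴) = 1 − 3t⁴ − 3t⁵ − t⁶ + 6t⁷ + 6t⁸ − t⁹ − 3t¹⁰ − 3t¹¹ + t¹⁵. -/

import Mathlib

open PowerSeries Finset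

/-- Indicator series of multiples of `m`. -/
private noncomputable def Sd (m : ℕ) : PowerSeries ℤ :=
  PowerSeries.mk fun n => if m ∣ n then 1 else 0

private lemma Sd_mul (m : ℕ) (hm : 0 < m) : Sd m * (1 - X ^ m) = 1 := by
  ext n
  rw [mul_sub, mul_one, map_sub, coeff_mul_X_pow']
  simp only [Sd, coeff_mk, coeff_one]
  by_cases hn : n = 0
  · subst hn
    rw [if_pos (dvd_zero m), if_neg (by omega), if_pos rfl]; ring
  · rw [if_neg hn]
    by_cases hle : m ≤ n
    · rw [if_pos hle]
      by_cases hd : m ∣ n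
      · rw [if_pos hd, if_pos (Nat.dvd_sub hd dvd_rfl)]; ring
      · rw [if_neg hd, if_neg fun hc => hd (by
          have h2 := Nat.sub_add_cancel hle
          exact h2 ▸ Nat.dvd_add hc dvd_rfl)]
        ring
    · rw [if_neg hle, if_neg fun hd => hle (Nat.le_of_dvd (Nat.pos_of_ne_zero hn) hd)]
      ring

/-- number of `(x,y,z)` with `x,y,z ≤ d` and `x+y+z = k`. -/
private def Tc (d k : ℕ) : ℕ :=
  ((range (d+1) ×ˢ range (d+1) ×ˢ range (d+1)).filter
    fun p => k = p.1 + p.2.1 + p.2.2).card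

private lemma coeff_geom_cube (d k : ℕ) :
    (coeff (R := ℤ) k) ((∑ x ∈ range (d+1), X^x)^3) = (Tc d k : ℤ) := by
  have h3 : (∑ x ∈ range (d+1), (X:ℤ⟦X⟧)^x)^3
      = ∑ x ∈ range (d+1), ∑ y ∈ range (d+1), ∑ z ∈ range (d+1),
          X^(x+y+z) := by
    rw [pow_three]
    simp only [Finset.sum_mul, Finset.mul_sum, ← pow_add]
    refine Finset.sum_congr rfl fun x _ => Finset.sum_congr rfl fun y _ =>
      Finset.sum_congr rfl fun z _ => ?_
    congr 1
    omega
  rw [h3]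
  simp only [map_sum, coeff_X_pow]
  rw [Tc]
  push_cast [← Finset.sum_boole]
  rw [Finset.sum_product, Finset.sum_congr rfl]
  intro x _
  rw [Finset.sum_product]

private lemma fin2_ext (f g : Fin 2 → ℕ) (h0 : f 0 = g 0) (h1 : f 1 = g 1) : f = g :=
  funext fun i => by fin_cases i <;> assumption

private lemma hcount (n : ℕ) :
    (Nat.card {v : (Fin 2 → ℕ) × (Fin 2 → ℕ) × (Fin 2 → ℕ) //
      v.1 0 + v.1 1 = v.2.1 0 + v.2.1 1 ∧
      v.2.1 0 + v.2.1 1 = v.2.2 0 + v.2.2 1 ∧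
      v.1 1 + v.2.1 1 + v.2.2 0 + 2 * v.2.2 1 = n} : ℤ)
    = ∑ d ∈ range (n+1), (Tc d (n - d) : ℤ) := by
  have e : {v : (Fin 2 → ℕ) × (Fin 2 → ℕ) × (Fin 2 → ℕ) //
      v.1 0 + v.1 1 = v.2.1 0 + v.2.1 1 ∧
      v.2.1 0 + v.2.1 1 = v.2.2 0 + v.2.2 1 ∧
      v.1 1 + v.2.1 1 + v.2.2 0 + 2 * v.2.2 1 = n} ≃
      ((range (n+1)).sigma fun d =>
        (range (d+1) ×ˢ range (d+1) ×ˢ range (d+1)).filter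
          fun p => (n - d) = p.1 + p.2.1 + p.2.2) :=
    { toFun := fun v => ⟨⟨v.1.2.2 0 + v.1.2.2 1, (v.1.1 1, v.1.2.1 1, v.1.2.2 1)⟩, by
        obtain ⟨h1, h2, h3⟩ := v.2
        simp only [Finset.mem_sigma, Finset.mem_range, Finset.mem_filter,
          Finset.mem_product]
        omega⟩
      invFun := fun p =>
        ⟨(![p.1.1 - p.1.2.1, p.1.2.1], ![p.1.1 - p.1.2.2.1, p.1.2.2.1],
          ![p.1.1 - p.1.2.2.2, p.1.2.2.2]), by
          have hp := p.2
          simp only [Finset.mem_sigma, Finset.mem_range, Finset.mem_filter,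
            Finset.mem_product] at hp
          simp only [Matrix.cons_val_zero, Matrix.cons_val_one, Matrix.head_cons]
          omega⟩
      left_inv := fun v => by
        obtain ⟨⟨a, b, c⟩, h1, h2, h3⟩ := v
        simp only at h1 h2 h3
        apply Subtype.ext
        simp only
        refine Prod.ext (fin2_ext _ _ ?_ ?_) (Prod.ext (fin2_ext _ _ ?_ ?_)
          (fin2_ext _ _ ?_ ?_)) <;>
          simp only [Matrix.cons_val_zero, Matrix.cons_val_one, Matrix.head_cons] <;>
          omega
      right_inv := fun p => by
        obtain ⟨⟨d, x, y, z⟩, hp⟩ := p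
        simp only [Finset.mem_sigma, Finset.mem_range, Finset.mem_filter,
          Finset.mem_product] at hp
        apply Subtype.ext
        simp only [Matrix.cons_val_zero, Matrix.cons_val_one, Matrix.head_cons]
        have hd : d - z + z = d := by omega
        rw [hd] }
  rw [Nat.card_congr e, Nat.card_eq_finsetCard, Finset.card_sigma]
  push_cast
  rfl

private lemma coeff_three_mul (n : ℕ) (B : ℤ⟦X⟧) :
    coeff (R := ℤ) n (3 * B) = 3 * coeff (R := ℤ) n B := by
  have h : (3:ℤ⟦X⟧) * B = (3:ℤ) • B := by rw [zsmul_eq_mul]; norm_num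
  rw [h, map_zsmul, smul_eq_mul]

private noncomputable def Fser (N : ℕ) : PowerSeries ℤ :=
  ∑ d ∈ range N, (X:ℤ⟦X⟧)^d * (∑ x ∈ range (d+1), X^x)^3

private lemma coeff_Fser (N m : ℕ) (h : m < N) :
    coeff (R := ℤ) m (Fser N) = ∑ d ∈ range (m+1), (Tc d (m - d) : ℤ) := by
  rw [Fser, map_sum]
  have step : ∀ d ∈ range N, coeff (R := ℤ) m ((X:ℤ⟦X⟧)^d * (∑ x ∈ range (d+1), X^x)^3)
      = if d ≤ m then (Tc d (m-d) : ℤ) else 0 := by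
    intro d _
    rw [mul_comm, coeff_mul_X_pow']
    split_ifs with hd
    · rw [coeff_geom_cube]
    · rfl
  rw [Finset.sum_congr rfl step,
    ← Finset.sum_subset (Finset.range_subset_range.2 h)
      (fun d _ hd => if_neg (by rw [Finset.mem_range] at hd; omega))]
  exact Finset.sum_congr rfl fun d hd =>
    if_pos (by rw [Finset.mem_range] at hd; omega)

private lemma Fser_mul (N : ℕ) :
    Fser N * (1 - X)^3 = ∑ d ∈ range N,
      ((X:ℤ⟦X⟧)^d - 3*X^(2*d+1) + 3*X^(3*d+2) - X^(4*d+3)) := by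
  rw [Fser, Finset.sum_mul]
  refine Finset.sum_congr rfl fun d _ => ?_
  have hg : (∑ x ∈ range (d+1), (X:ℤ⟦X⟧)^x) * (1 - X) = 1 - X^(d+1) := by
    have hgeom := geom_sum_mul (X:ℤ⟦X⟧) (d+1)
    linear_combination -hgeom
  calc (X:ℤ⟦X⟧)^d * (∑ x ∈ range (d+1), X^x)^3 * (1-X)^3
      = X^d * ((∑ x ∈ range (d+1), (X:ℤ⟦X⟧)^x) * (1-X))^3 := by ring
    _ = X^d * (1 - X^(d+1))^3 := by rw [hg]
    _ = X^d - 3*X^(2*d+1) + 3*X^(3*d+2) - X^(4*d+3) := by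
        have p1 : 2*d+1 = d + (d+1) := by omega
        have p2 : 3*d+2 = d + ((d+1) + (d+1)) := by omega
        have p3 : 4*d+3 = d + ((d+1) + ((d+1) + (d+1))) := by omega
        rw [p1, p2, p3]
        simp only [pow_add]
        ring

private lemma sum_ind1 (n N : ℕ) (h : n < N) :
    ∑ d ∈ range N, (if n = d then (1:ℤ) else 0) = 1 := by
  rw [Finset.sum_eq_single n (fun d _ hd => if_neg (by omega))
    (fun hn => absurd (Finset.mem_range.2 h) hn), if_pos rfl]

private lemma sum_ind2 (n N : ℕ) (h : n < N) :
    ∑ d ∈ range N, (if n = 2*d+1 then (1:ℤ) else 0)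
      = if 1 ≤ n ∧ 2 ∣ (n-1) then 1 else 0 := by
  by_cases hc : 1 ≤ n ∧ 2 ∣ (n-1)
  · rw [if_pos hc, Finset.sum_eq_single ((n-1)/2) (fun d _ hd => if_neg (by omega))
      (fun hn => absurd (Finset.mem_range.2 (by omega)) hn), if_pos (by omega)]
  · rw [if_neg hc]
    exact Finset.sum_eq_zero fun d _ => if_neg (by omega)

private lemma sum_ind3 (n N : ℕ) (h : n < N) :
    ∑ d ∈ range N, (if n = 3*d+2 then (1:ℤ) else 0)
      = if 2 ≤ n ∧ 3 ∣ (n-2) then 1 else 0 := by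
  by_cases hc : 2 ≤ n ∧ 3 ∣ (n-2)
  · rw [if_pos hc, Finset.sum_eq_single ((n-2)/3) (fun d _ hd => if_neg (by omega))
      (fun hn => absurd (Finset.mem_range.2 (by omega)) hn), if_pos (by omega)]
  · rw [if_neg hc]
    exact Finset.sum_eq_zero fun d _ => if_neg (by omega)

private lemma sum_ind4 (n N : ℕ) (h : n < N) :
    ∑ d ∈ range N, (if n = 4*d+3 then (1:ℤ) else 0)
      = if 3 ≤ n ∧ 4 ∣ (n-3) then 1 else 0 := by
  by_cases hc : 3 ≤ n ∧ 4 ∣ (n-3)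
  · rw [if_pos hc, Finset.sum_eq_single ((n-3)/4) (fun d _ hd => if_neg (by omega))
      (fun hn => absurd (Finset.mem_range.2 (by omega)) hn), if_pos (by omega)]
  · rw [if_neg hc]
    exact Finset.sum_eq_zero fun d _ => if_neg (by omega)

private lemma key :
    (PowerSeries.mk fun n : ℕ =>
        ((Nat.card {v : (Fin 2 → ℕ) × (Fin 2 → ℕ) × (Fin 2 → ℕ) //
          v.1 0 + v.1 1 = v.2.1 0 + v.2.1 1 ∧
          v.2.1 0 + v.2.1 1 = v.2.2 0 + v.2.2 1 ∧
          v.1 1 + v.2.1 1 + v.2.2 0 + 2 * v.2.2 1 = n}) : ℤ)) * (1 - X)^3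
      = Sd 1 - 3 * (Sd 2 * X^1) + 3 * (Sd 3 * X^2) - Sd 4 * X^3 := by
  ext n
  have hprod : coeff (R := ℤ) n ((PowerSeries.mk fun n : ℕ =>
        ((Nat.card {v : (Fin 2 → ℕ) × (Fin 2 → ℕ) × (Fin 2 → ℕ) //
          v.1 0 + v.1 1 = v.2.1 0 + v.2.1 1 ∧
          v.2.1 0 + v.2.1 1 = v.2.2 0 + v.2.2 1 ∧
          v.1 1 + v.2.1 1 + v.2.2 0 + 2 * v.2.2 1 = n}) : ℤ)) * (1 - X)^3)
      = coeff (R := ℤ) n (Fser (n+1) * (1 - X)^3) := by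
    rw [coeff_mul, coeff_mul]
    refine Finset.sum_congr rfl fun p hp => ?_
    rw [Finset.HasAntidiagonal.mem_antidiagonal] at hp
    rw [coeff_mk, hcount, coeff_Fser (n+1) p.1 (by omega)]
  rw [hprod, Fser_mul, map_sum]
  simp only [map_sub, map_add, coeff_three_mul, coeff_X_pow]
  rw [Finset.sum_sub_distrib, Finset.sum_add_distrib, Finset.sum_sub_distrib,
    ← Finset.mul_sum, ← Finset.mul_sum,
    sum_ind1 n (n+1) (by omega), sum_ind2 n (n+1) (by omega),
    sum_ind3 n (n+1) (by omega), sum_ind4 n (n+1) (by omega)]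
  simp only [map_sub, map_add, coeff_three_mul, coeff_mul_X_pow', Sd, coeff_mk,
    coeff_one]
  have h1 : (1:ℕ) ∣ n := one_dvd n
  split_ifs <;> omega

theorem weighted_P1P1P1_example_hilbert_series :
    (PowerSeries.mk fun n : ℕ =>
        ((Nat.card {v : (Fin 2 → ℕ) × (Fin 2 → ℕ) × (Fin 2 → ℕ) //
          v.1 0 + v.1 1 = v.2.1 0 + v.2.1 1 ∧
          v.2.1 0 + v.2.1 1 = v.2.2 0 + v.2.2 1 ∧
          v.1 1 + v.2.1 1 + v.2.2 0 + 2 * v.2.2 1 = n}) : ℤ)) *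
      ((1 - PowerSeries.X) * (1 - PowerSeries.X ^ 2) ^ 3 *
        (1 - PowerSeries.X ^ 3) ^ 3 * (1 - PowerSeries.X ^ 4)) =
    1 - 3 * PowerSeries.X ^ 4 - 3 * PowerSeries.X ^ 5 - PowerSeries.X ^ 6 +
      6 * PowerSeries.X ^ 7 + 6 * PowerSeries.X ^ 8 - PowerSeries.X ^ 9 -
      3 * PowerSeries.X ^ 10 - 3 * PowerSeries.X ^ 11 + PowerSeries.X ^ 15 := by
  have hkey := key
  have e1 := Sd_mul 1 (by norm_num)
  have e2 := Sd_mul 2 (by norm_num)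
  have e3 := Sd_mul 3 (by norm_num)
  have e4 := Sd_mul 4 (by norm_num)
  linear_combination ((1-X)*(1+X)^3*(1-X^3)^3*(1-X^4)) * hkey
    + ((1+X)^3*(1-X^3)^3*(1-X^4)) * e1
    + (-3*X*(1+X)^2*(1-X^3)^3*(1-X^4)) * e2
    + (3*X^2*(1-X)*(1+X)^3*(1-X^3)^2*(1-X^4)) * e3
    + (-X^3*(1-X)*(1+X)^3*(1-X^3)^3) * e4
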